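/- For a > 1, lim_{b→0⁺} ∫_0^1 √(((1-av)²+b²)/(1-v²)) dv = ∫_0^{1/a} (1-av)/√(1-v²) dv - ∫_{1/a}^1 (1-av)/√(1-v²) dv = π/2 - a + 2√(a²-1) - 2·arcsec(a). -/

import Mathlib

open Real Filter Topology
open MeasureTheory intervalIntegral

lemma hasDerivF (a : ℝ) {v : ℝ} (h1 : -1 < v) (h2 : v < 1) :
    HasDerivAt (fun v => Real.arcsin v + a * Real.sqrt (1 - v ^ 2))
      ((1 - a * v) / Real.sqrt (1 - v ^ 2)) v := by
  have hv2 : (0:ℝ) < 1 - v ^ 2 := by nlinarith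
  have hs : 0 < Real.sqrt (1 - v ^ 2) := Real.sqrt_pos.2 hv2
  have hA : HasDerivAt Real.arcsin (1 / Real.sqrt (1 - v ^ 2)) v :=
    Real.hasDerivAt_arcsin (by linarith) (by linarith)
  have hP : HasDerivAt (fun v : ℝ => 1 - v ^ 2) (-(2 * v)) v := by
    simpa using ((hasDerivAt_pow 2 v).const_sub 1)
  have hS : HasDerivAt (fun v : ℝ => Real.sqrt (1 - v ^ 2))
      (1 / (2 * Real.sqrt (1 - v ^ 2)) * (-(2 * v))) v :=
    (Real.hasDerivAt_sqrt hv2.ne').comp v hP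
  have : HasDerivAt (fun v => Real.arcsin v + a * Real.sqrt (1 - v ^ 2)) _ v := hA.add (hS.const_mul a)
  convert this using 1
  have h2s : Real.sqrt (1 - v ^ 2) ≠ 0 := hs.ne'
  field_simp
  ring

lemma contF (a : ℝ) : Continuous (fun v => Real.arcsin v + a * Real.sqrt (1 - v ^ 2)) :=
  Real.continuous_arcsin.add (continuous_const.mul ((continuous_const.sub (continuous_pow 2)).sqrt))

lemma int1 (a : ℝ) (ha : 1 < a) :
    IntervalIntegrable (fun v => (1 - a * v) / Real.sqrt (1 - v ^ 2)) volume 0 (1/a) := by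
  have ha0 : 0 < a := lt_trans one_pos ha
  have hc1 : 1/a < 1 := by rw [div_lt_one ha0]; exact ha
  apply ContinuousOn.intervalIntegrable
  apply ContinuousOn.div (by fun_prop) (by fun_prop)
  intro v hv
  rw [Set.uIcc_of_le (by positivity)] at hv
  have : (0:ℝ) < 1 - v ^ 2 := by nlinarith [hv.1, hv.2]
  exact (Real.sqrt_pos.2 this).ne'

lemma int2 (a : ℝ) (ha : 1 < a) :
    IntervalIntegrable (fun v => (1 - a * v) / Real.sqrt (1 - v ^ 2)) volume (1/a) 1 := by
  have ha0 : 0 < a := lt_trans one_pos ha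
  have hc0 : 0 < 1/a := by positivity
  have hc1 : 1/a < 1 := by rw [div_lt_one ha0]; exact ha
  have h := intervalIntegrable_deriv_of_nonneg
      (g := fun v => -(Real.arcsin v + a * Real.sqrt (1 - v ^ 2)))
      (g' := fun v => -((1 - a * v) / Real.sqrt (1 - v ^ 2)))
      (a := 1/a) (b := 1) ((contF a).neg.continuousOn)
      (fun x hx => by
        rw [min_eq_left hc1.le, max_eq_right hc1.le] at hx
        exact (hasDerivF a (by linarith [hx.1]) hx.2).neg)
      (fun x hx => by
        rw [min_eq_left hc1.le, max_eq_right hc1.le] at hx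
        have hx1 : 1 < a * x := by
          have := (div_lt_iff₀ ha0).mp hx.1
          linarith
        have : (1 - a * x) / Real.sqrt (1 - x ^ 2) ≤ 0 :=
          div_nonpos_of_nonpos_of_nonneg (by linarith) (Real.sqrt_nonneg _)
        linarith)
  have h2 := h.neg
  rw [Pi.neg_def] at h2
  convert h2 using 1
  funext v
  simp

lemma part2 (a : ℝ) (ha : 1 < a) :
    (∫ v in (0:ℝ)..(1/a), (1 - a * v) / Real.sqrt (1 - v ^ 2)) -
        (∫ v in (1/a:ℝ)..1, (1 - a * v) / Real.sqrt (1 - v ^ 2)) =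
      π / 2 - a + 2 * Real.sqrt (a ^ 2 - 1) - 2 * Real.arccos (1 / a) := by
  have ha0 : 0 < a := lt_trans one_pos ha
  have hc0 : 0 < 1/a := by positivity
  have hc1 : 1/a < 1 := by rw [div_lt_one ha0]; exact ha
  set F : ℝ → ℝ := fun v => Real.arcsin v + a * Real.sqrt (1 - v ^ 2) with hF
  have key1 : (∫ v in (0:ℝ)..(1/a), (1 - a * v) / Real.sqrt (1 - v ^ 2)) = F (1/a) - F 0 := by
    apply intervalIntegral.integral_eq_sub_of_hasDerivAt_of_le hc0.le ((contF a).continuousOn)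
      (fun x hx => hasDerivF a (by linarith [hx.1]) (by linarith [hx.2])) (int1 a ha)
  have key2 : (∫ v in (1/a:ℝ)..1, (1 - a * v) / Real.sqrt (1 - v ^ 2)) = F 1 - F (1/a) := by
    apply intervalIntegral.integral_eq_sub_of_hasDerivAt_of_le hc1.le ((contF a).continuousOn)
      (fun x hx => hasDerivF a (by linarith [hx.1]) (by linarith [hx.2])) (int2 a ha)
  have hF0 : F 0 = a := by simp [hF]
  have hF1 : F 1 = π / 2 := by simp [hF, Real.arcsin_one]
  have hFc : F (1/a) = Real.arcsin (1/a) + Real.sqrt (a ^ 2 - 1) := by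
    have h1 : (1:ℝ) - (1/a) ^ 2 = (a ^ 2 - 1) / a ^ 2 := by field_simp
    have h2 : Real.sqrt ((a ^ 2 - 1) / a ^ 2) = Real.sqrt (a ^ 2 - 1) / a := by
      rw [Real.sqrt_div (by nlinarith), Real.sqrt_sq ha0.le]
    simp only [hF, h1, h2]
    field_simp
  have harc : Real.arcsin (1/a) = π / 2 - Real.arccos (1/a) := by
    rw [Real.arccos]; ring
  rw [key1, key2, hF0, hF1, hFc, harc]
  ring

lemma part1 (a : ℝ) (ha : 1 < a) :
    Tendsto
      (fun b : ℝ => ∫ v in (0:ℝ)..1,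
        Real.sqrt (((1 - a * v) ^ 2 + b ^ 2) / (1 - v ^ 2)))
      (nhdsWithin 0 (Set.Ioi 0))
      (nhds ((∫ v in (0:ℝ)..(1/a), (1 - a * v) / Real.sqrt (1 - v ^ 2)) -
             ∫ v in (1/a:ℝ)..1, (1 - a * v) / Real.sqrt (1 - v ^ 2))) := by
  have ha0 : 0 < a := lt_trans one_pos ha
  have hc0 : 0 < 1/a := by positivity
  have hc1 : 1/a < 1 := by rw [div_lt_one ha0]; exact ha
  set g : ℝ → ℝ := fun v => |(1 - a * v) / Real.sqrt (1 - v ^ 2)| with hg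
  -- the limit identification
  have hsplit : (∫ v in (0:ℝ)..1, g v) =
      (∫ v in (0:ℝ)..(1/a), (1 - a * v) / Real.sqrt (1 - v ^ 2)) -
        (∫ v in (1/a:ℝ)..1, (1 - a * v) / Real.sqrt (1 - v ^ 2)) := by
    rw [← intervalIntegral.integral_add_adjacent_intervals (int1 a ha).abs (int2 a ha).abs]
    congr 1
    · apply intervalIntegral.integral_congr
      intro v hv
      rw [Set.uIcc_of_le hc0.le] at hv
      have : 0 ≤ 1 - a * v := by
        have : a * v ≤ a * (1/a) := by
          apply mul_le_mul_of_nonneg_left hv.2 ha0.le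
        rw [mul_one_div_cancel ha0.ne'] at this
        linarith
      exact abs_of_nonneg (div_nonneg this (Real.sqrt_nonneg _))
    · rw [← intervalIntegral.integral_neg]
      apply intervalIntegral.integral_congr
      intro v hv
      rw [Set.uIcc_of_le hc1.le] at hv
      have : 1 - a * v ≤ 0 := by
        have : a * (1/a) ≤ a * v := mul_le_mul_of_nonneg_left hv.1 ha0.le
        rw [mul_one_div_cancel ha0.ne'] at this
        linarith
      exact abs_of_nonpos (div_nonpos_of_nonpos_of_nonneg this (Real.sqrt_nonneg _))
  rw [← hsplit]
  rw [show (∫ v in (0:ℝ)..1, g v) = ∫ v in Set.Ioo (0:ℝ) 1, g v by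
    rw [intervalIntegral.integral_of_le zero_le_one, MeasureTheory.integral_Ioc_eq_integral_Ioo]]
  have hconv : ∀ b : ℝ, (∫ v in (0:ℝ)..1,
        Real.sqrt (((1 - a * v) ^ 2 + b ^ 2) / (1 - v ^ 2))) =
      ∫ v in Set.Ioo (0:ℝ) 1, Real.sqrt (((1 - a * v) ^ 2 + b ^ 2) / (1 - v ^ 2)) := fun b => by
    rw [intervalIntegral.integral_of_le zero_le_one, MeasureTheory.integral_Ioc_eq_integral_Ioo]
  simp only [hconv]
  -- dominated convergence
  have hibound : MeasureTheory.Integrable (fun v => 1 / Real.sqrt (1 - v ^ 2))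
      (MeasureTheory.volume.restrict (Set.Ioo (0:ℝ) 1)) := by
    have h := integrableOn_deriv_of_nonneg (g := Real.arcsin)
      (g' := fun v => 1 / Real.sqrt (1 - v ^ 2)) (a := 0) (b := 1)
      Real.continuous_arcsin.continuousOn
      (fun x hx => Real.hasDerivAt_arcsin (by linarith [hx.1]) (by linarith [hx.2]))
      (fun x _ => by positivity)
    exact h.mono_set Set.Ioo_subset_Ioc_self
  apply MeasureTheory.tendsto_integral_filter_of_dominated_convergence
    (bound := fun v => (a + 2) * (1 / Real.sqrt (1 - v ^ 2)))
  · apply Filter.Eventually.of_forall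
    intro b
    apply Measurable.aestronglyMeasurable
    fun_prop
  · filter_upwards [Ioo_mem_nhdsGT_of_mem (Set.mem_Ico.2 ⟨le_refl (0:ℝ), one_pos⟩)] with b hb
    apply (MeasureTheory.ae_restrict_mem measurableSet_Ioo).mono
    intro v hv
    have hden : (0:ℝ) < 1 - v ^ 2 := by nlinarith [hv.1, hv.2]
    have hs : 0 < Real.sqrt (1 - v ^ 2) := Real.sqrt_pos.2 hden
    rw [Real.norm_eq_abs, abs_of_nonneg (Real.sqrt_nonneg _),
      Real.sqrt_div (by positivity), mul_one_div]
    gcongr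
    have hb2 : b ^ 2 ≤ 1 := by nlinarith [hb.1, hb.2]
    have h1 : (1 - a * v) ^ 2 ≤ (a + 1) ^ 2 := by
      nlinarith [mul_pos (mul_pos ha0 (by linarith [hv.1] : (0:ℝ) < 1 + v))
        (by nlinarith [mul_pos ha0 hv.1, hv.2] : (0:ℝ) < a + 2 - a * v)]
    calc Real.sqrt ((1 - a * v) ^ 2 + b ^ 2) ≤ Real.sqrt ((a + 2) ^ 2) :=
          Real.sqrt_le_sqrt (by nlinarith)
      _ = a + 2 := Real.sqrt_sq (by linarith)
  · exact hibound.const_mul (a + 2)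
  · apply Filter.Eventually.of_forall
    intro v
    have : Tendsto (fun b : ℝ => Real.sqrt (((1 - a * v) ^ 2 + b ^ 2) / (1 - v ^ 2)))
        (nhds 0) (nhds (Real.sqrt (((1 - a * v) ^ 2 + 0 ^ 2) / (1 - v ^ 2)))) := by
      apply Continuous.tendsto
      exact (((continuous_const.add ((continuous_pow 2))).div_const _)).sqrt
    have heq : Real.sqrt (((1 - a * v) ^ 2 + 0 ^ 2) / (1 - v ^ 2)) = g v := by
      rw [hg]
      simp only [ne_eq, OfNat.ofNat_ne_zero, not_false_eq_true, zero_pow, add_zero]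
      rw [Real.sqrt_div (sq_nonneg _), abs_div, Real.sqrt_sq_eq_abs,
        abs_of_nonneg (Real.sqrt_nonneg _)]
    rw [← heq]
    exact this.mono_left nhdsWithin_le_nhds

theorem upper_half_cone_area_limit (a : ℝ) (ha : 1 < a) :
    Tendsto
      (fun b : ℝ => ∫ v in (0:ℝ)..1,
        Real.sqrt (((1 - a * v) ^ 2 + b ^ 2) / (1 - v ^ 2)))
      (nhdsWithin 0 (Set.Ioi 0))
      (nhds ((∫ v in (0:ℝ)..(1/a), (1 - a * v) / Real.sqrt (1 - v ^ 2)) -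
             ∫ v in (1/a:ℝ)..1, (1 - a * v) / Real.sqrt (1 - v ^ 2))) ∧
    (∫ v in (0:ℝ)..(1/a), (1 - a * v) / Real.sqrt (1 - v ^ 2)) -
        (∫ v in (1/a:ℝ)..1, (1 - a * v) / Real.sqrt (1 - v ^ 2)) =
      π / 2 - a + 2 * Real.sqrt (a ^ 2 - 1) - 2 * Real.arccos (1 / a) :=
  ⟨part1 a ha, part2 a ha⟩
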